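/- For the Exchange Evaluation game EE_n, deterministic one-way classical communication requires at least 2^n + n − 1 bits, i.e., ⌈log₂ |Z_2^n × F_n|⌉ = 2^n + n − 1. -/
import Mathlib


/-- Binary vectors of length `n` over `Z_2`. -/
abbrev V2 (n : ℕ) := Fin n → ZMod 2

/-- Alice's (and Bob's) input set `Z_2^n × F_n`, where `F_n = {f | f 0 = 0}`. -/
abbrev EEInput (n : ℕ) := {p : V2 n × (V2 n → ZMod 2) // p.2 0 = 0}

lemma cardF (n : ℕ) : Fintype.card {f : V2 n → ZMod 2 // f 0 = 0} = 2 ^ (2 ^ n - 1) := by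
  have e1 : {f : V2 n → ZMod 2 // f 0 = 0} ≃ {p : ZMod 2 × ({v : V2 n // v ≠ 0} → ZMod 2) // p.1 = 0} :=
    (Equiv.funSplitAt (0 : V2 n) (ZMod 2)).subtypeEquiv (fun f => by simp [Equiv.funSplitAt])
  have e2 := e1.trans (Equiv.prodSubtypeFstEquivSubtypeProd (p := fun c => c = 0))
  rw [Fintype.card_congr e2, Fintype.card_prod, Fintype.card_subtype_eq, one_mul,
    Fintype.card_fun]
  have : Fintype.card {v : V2 n // v ≠ 0} = 2 ^ n - 1 := by
    rw [Fintype.card_subtype_compl, Fintype.card_subtype_eq]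
    simp [Fintype.card_fun]
  rw [this]; simp

lemma cardEE (n : ℕ) : Fintype.card (EEInput n) = 2 ^ (2 ^ n + n - 1) := by
  have e1 : EEInput n ≃ {p : ((V2 n → ZMod 2) × V2 n) // p.1 0 = 0} :=
    (Equiv.prodComm _ _).subtypeEquiv (fun p => by simp)
  have e2 := e1.trans (Equiv.prodSubtypeFstEquivSubtypeProd (p := fun f : V2 n → ZMod 2 => f 0 = 0))
  rw [Fintype.card_congr e2, Fintype.card_prod, cardF, Fintype.card_fun]
  have h1 : (1:ℕ) ≤ 2 ^ n := Nat.one_le_two_pow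
  rw [Fintype.card_fin, ZMod.card, ← pow_add]
  congr 1
  omega

/-- Deterministic one-way classical communication for `EE_n` requires at least
`2^n + n − 1` bits: `⌈log₂ |Z_2^n × F_n|⌉ = 2^n + n − 1`, and any message set `M`
of a correct protocol satisfies `⌈log₂ |M|⌉ ≥ 2^n + n − 1`. -/
theorem stmt16 (n : ℕ) {M : Type*} [Fintype M]
    (msg : EEInput n → M) (out : M → EEInput n → ZMod 2)
    -- correctness: Bob outputs `EE_n(x, f, y, g) = f(y) + g(x)` for all inputs,
    -- where Alice holds `a = (x, f)` and Bob holds `b = (y, g)`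
    (hcorrect : ∀ a b : EEInput n, out (msg a) b = a.1.2 b.1.1 + b.1.2 a.1.1) :
    Nat.clog 2 (Fintype.card (EEInput n)) = 2 ^ n + n - 1 ∧
    2 ^ n + n - 1 ≤ Nat.clog 2 (Fintype.card M) := by
  have hclog : Nat.clog 2 (Fintype.card (EEInput n)) = 2 ^ n + n - 1 := by
    rw [cardEE, Nat.clog_pow 2 _ one_lt_two]
  refine ⟨hclog, ?_⟩
  -- `msg` is injective since the rows of `EE_n` are pairwise distinct
  have hinj : Function.Injective msg := by
    intro a a' hmsg
    have key : ∀ b : EEInput n, a.1.2 b.1.1 + b.1.2 a.1.1 = a'.1.2 b.1.1 + b.1.2 a'.1.1 := by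
      intro b
      rw [← hcorrect a b, ← hcorrect a' b, hmsg]
    obtain ⟨⟨x, f⟩, hf⟩ := a
    obtain ⟨⟨x', f'⟩, hf'⟩ := a'
    -- first, `f = f'` (take `g = 0`)
    have hff : f = f' := by
      funext y
      have := key ⟨(y, fun _ => 0), rfl⟩
      simpa using this
    -- then `x = x'` (take `g v = v i` for a distinguishing coordinate `i`)
    have hxx : x = x' := by
      by_contra hne
      obtain ⟨i, hi⟩ := Function.ne_iff.mp hne
      have h0 : ((0 : V2 n)) i = 0 := rfl
      have := key ⟨((0 : V2 n), fun v => v i), h0⟩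
      simp only [hff] at this
      exact hi (by simpa using add_left_cancel this)
    simp [hff, hxx]
  have hle : Fintype.card (EEInput n) ≤ Fintype.card M :=
    Fintype.card_le_of_injective msg hinj
  calc 2 ^ n + n - 1 = Nat.clog 2 (Fintype.card (EEInput n)) := hclog.symm
    _ ≤ Nat.clog 2 (Fintype.card M) := Nat.clog_mono_right 2 hle
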